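/- arXiv:2512.20542 — 4 statements merged into one kernel-verified Lean document; each statement's English description precedes it below -/
import Mathlib

section
/- (Franel's identity) For all positive integers m, n, ∫₀¹ b₁(m x)·b₁(n x) dx = gcd(m,n)² / (12 m n), where b₁(x) = {x} - 1/2 is the first periodic Bernoulli function (note: with g = gcd(m,n), the value equals g/(12·(m/g)·(n/g)·g) = g²/(12mn)). -/
open Finset MeasureTheory intervalIntegral

noncomputable def B1 (x : ℝ) : ℝ := Int.fract x - 1/2

lemma B1_add_nat (x : ℝ) (k : ℕ) : B1 (x + k) = B1 x := by
  simp [B1, Int.fract_add_natCast]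


lemma B1_abs_le (x : ℝ) : |B1 x| ≤ 1 := by
  have h1 := Int.fract_nonneg x
  have h2 := Int.fract_lt_one x
  rw [abs_le, B1]; constructor <;> nlinarith

lemma B1_II {p q : ℝ → ℝ} (hp : Measurable p) (hq : Measurable q) (a b : ℝ) :
    IntervalIntegrable (fun x => B1 (p x) * B1 (q x)) volume a b := by
  apply (_root_.intervalIntegrable_const (c := (1:ℝ))).mono_fun'
  · exact (((measurable_fract.comp hp).sub measurable_const).mul
      ((measurable_fract.comp hq).sub measurable_const)).aestronglyMeasurable
  · refine Filter.Eventually.of_forall fun x => ?_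
    have h1 := B1_abs_le (p x)
    have h2 := B1_abs_le (q x)
    have := abs_nonneg (B1 (p x))
    calc ‖B1 (p x) * B1 (q x)‖ = |B1 (p x)| * |B1 (q x)| := abs_mul _ _
    _ ≤ 1 := by nlinarith

lemma sum_range_cast (m : ℕ) : ∑ j ∈ Finset.range m, (j : ℝ) = m * (m - 1) / 2 := by
  induction m with
  | zero => simp
  | succ k ih => rw [Finset.sum_range_succ, ih]; push_cast; ring

lemma B1_mult (m : ℕ) (hm : 0 < m) (t : ℝ) :
    ∑ j ∈ Finset.range m, B1 ((t + j) / m) = B1 t := by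
  have hm0 : (m : ℝ) ≠ 0 := Nat.cast_ne_zero.mpr hm.ne'
  set S : ℝ → ℝ := fun s => ∑ j ∈ Finset.range m, B1 ((s + j) / m) with hS
  have hper : Function.Periodic S 1 := by
    intro s
    have h1 : ∀ j : ℕ, B1 ((s + 1 + (j:ℝ)) / m) = B1 ((s + ((j:ℕ)+1 : ℕ)) / m) := by
      intro j; push_cast; ring_nf
    calc S (s + 1) = ∑ j ∈ Finset.range m, B1 ((s + ((j:ℕ)+1 : ℕ)) / m) := by
          simp only [hS]; exact Finset.sum_congr rfl fun j _ => h1 j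
      _ = ∑ j ∈ Finset.range (m+1), B1 ((s + j) / m) - B1 ((s + (0:ℕ)) / m) := by
          rw [Finset.sum_range_succ' (fun j : ℕ => B1 ((s + j) / m)) m]; ring
      _ = S s + B1 ((s + m) / m) - B1 (s / m) := by
          rw [Finset.sum_range_succ]
          simp only [hS, Nat.cast_zero, add_zero]
          try ring
      _ = S s := by
          have : (s + m) / m = s / m + 1 := by field_simp
          rw [this, show s/m + 1 = s/m + ((1:ℕ):ℝ) by norm_num, B1_add_nat]; ring
  -- reduce to t ∈ [0,1)
  have hfr : S t = S (Int.fract t) := by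
    have : Int.fract t = t - ⌊t⌋ := rfl
    rw [this, show t - (⌊t⌋:ℝ) = t - ⌊t⌋ * 1 by ring, hper.sub_int_mul_eq]
  have hbase : ∀ s : ℝ, 0 ≤ s → s < 1 → S s = B1 s := by
    intro s h0 h1
    have hfe : ∀ j ∈ Finset.range m, B1 ((s + j) / m) = (s + j) / m - 1/2 := by
      intro j hj
      have hjm : (j : ℝ) ≤ (m : ℝ) - 1 := by
        have := Finset.mem_range.mp hj
        have : (j : ℝ) + 1 ≤ m := by exact_mod_cast this
        linarith
      have hmpos : (0:ℝ) < m := by exact_mod_cast hm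
      have : Int.fract ((s + j) / m) = (s + j) / m := by
        rw [Int.fract_eq_self]
        constructor
        · positivity
        · rw [div_lt_one hmpos]; linarith
      rw [B1, this]
    show (∑ j ∈ Finset.range m, B1 ((s + j) / m)) = B1 s
    rw [Finset.sum_congr rfl hfe]
    have : ∑ j ∈ Finset.range m, ((s + (j:ℝ)) / m - 1/2)
        = (m * s + m * (m-1)/2) / m - m * (1/2) := by
      rw [Finset.sum_sub_distrib, Finset.sum_const, ← Finset.sum_div, Finset.sum_add_distrib,
        Finset.sum_const, sum_range_cast]
      simp [Finset.card_range]
    rw [this, B1, Int.fract_eq_self.mpr ⟨h0, h1⟩]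
    field_simp
    ring
  show S t = B1 t
  rw [hfr, hbase _ (Int.fract_nonneg t) (Int.fract_lt_one t), B1, B1, Int.fract_fract]

lemma sum_mod_bij (m n : ℕ) (hm : 0 < m) (h : Nat.gcd m n = 1) (f : ℕ → ℝ) :
    ∑ k ∈ Finset.range m, f (n * k % m) = ∑ j ∈ Finset.range m, f j := by
  have hinj : ∀ x ∈ Finset.range m, ∀ y ∈ Finset.range m,
      n * x % m = n * y % m → x = y := by
    intro x hx y hy hxy
    have hmod : x ≡ y [MOD m] :=
      Nat.ModEq.cancel_left_of_coprime h hxy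
    have := hmod.eq_of_lt_of_lt (Finset.mem_range.mp hx) (Finset.mem_range.mp hy)
    exact this
  have himg : (Finset.range m).image (fun k => n * k % m) = Finset.range m := by
    apply Finset.eq_of_subset_of_card_le
    · intro j hj
      obtain ⟨k, _, hk⟩ := Finset.mem_image.mp hj
      rw [← hk]
      exact Finset.mem_range.mpr (Nat.mod_lt _ hm)
    · rw [Finset.card_image_of_injOn (fun x hx y hy => hinj x hx y hy)]
  calc ∑ k ∈ Finset.range m, f (n * k % m)
      = ∑ j ∈ (Finset.range m).image (fun k => n * k % m), f j :=
        (Finset.sum_image hinj).symm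
    _ = ∑ j ∈ Finset.range m, f j := by rw [himg]

lemma B1_sum_coprime (m n : ℕ) (hm : 0 < m) (h : Nat.gcd m n = 1) (c : ℝ) :
    ∑ k ∈ Finset.range m, B1 ((c + (n * k : ℕ)) / m) = B1 c := by
  have hm0 : (m : ℝ) ≠ 0 := Nat.cast_ne_zero.mpr hm.ne'
  have h1 : ∀ k : ℕ, B1 ((c + (n * k : ℕ)) / m) = B1 ((c + (n * k % m : ℕ)) / m) := by
    intro k
    have hdiv := Nat.mod_add_div (n * k) m
    have hcast : ((n * k % m : ℕ) : ℝ) + (m : ℝ) * ((n * k / m : ℕ) : ℝ) = (n : ℝ) * k := by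
      exact_mod_cast hdiv
    have harg : (c + (n * k : ℕ)) / m = (c + (n * k % m : ℕ)) / m + ((n * k / m : ℕ) : ℝ) := by
      field_simp
      linarith [hcast, (Nat.cast_mul n k : ((n * k : ℕ) : ℝ) = _)]
    rw [harg, B1_add_nat]
  rw [Finset.sum_congr rfl (fun k _ => h1 k)]
  rw [sum_mod_bij m n hm h (fun j => B1 ((c + j) / m))]
  exact B1_mult m hm c

lemma franel_key (m n : ℕ) (hm : 0 < m) (h : Nat.gcd m n = 1) :
    (∫ x in (0:ℝ)..1, B1 (m * x) * B1 (n * x))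
      = (1 / m) * ∫ x in (0:ℝ)..1, B1 x * B1 (n * x) := by
  have hm0 : (m : ℝ) ≠ 0 := Nat.cast_ne_zero.mpr hm.ne'
  have hqmeas : Measurable fun u : ℝ => (n : ℝ) * u / (m : ℝ) :=
    (measurable_id.const_mul ((n:ℝ))).div_const _
  have hstep1 : (∫ x in (0:ℝ)..1, B1 ((m:ℝ) * x) * B1 ((n:ℝ) * x))
      = (m:ℝ)⁻¹ • ∫ u in ((m:ℝ)*0)..((m:ℝ)*1), B1 u * B1 ((n:ℝ) * u / m) := by
    rw [← intervalIntegral.integral_comp_mul_left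
      (f := fun u => B1 u * B1 ((n:ℝ) * u / m)) hm0]
    apply intervalIntegral.integral_congr
    intro x _
    simp only []
    congr 2
    field_simp
  have hsplit : (∫ u in ((0:ℕ):ℝ)..((m:ℕ):ℝ), B1 u * B1 ((n:ℝ) * u / m))
      = ∑ k ∈ Finset.range m, ∫ u in ((k:ℕ):ℝ)..(((k+1:ℕ)):ℝ), B1 u * B1 ((n:ℝ) * u / m) := by
    exact (intervalIntegral.sum_integral_adjacent_intervals
      (a := fun k : ℕ => (k:ℝ)) (fun k _ => B1_II measurable_id hqmeas _ _)).symm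
  have hshift : ∀ k : ℕ, (∫ u in ((k:ℕ):ℝ)..(((k+1:ℕ)):ℝ), B1 u * B1 ((n:ℝ) * u / m))
      = ∫ u in (0:ℝ)..1, B1 (u + (k:ℝ)) * B1 ((n:ℝ) * (u + (k:ℝ)) / m) := by
    intro k
    rw [intervalIntegral.integral_comp_add_right
      (f := fun u => B1 u * B1 ((n:ℝ) * u / m)) ((k:ℝ))]
    push_cast
    rw [zero_add, add_comm (1:ℝ) (k:ℝ)]
  have hpt : ∀ (k : ℕ) (u : ℝ), B1 (u + (k:ℝ)) * B1 ((n:ℝ) * (u + (k:ℝ)) / m)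
      = B1 u * B1 (((n:ℝ) * u + ((n*k : ℕ):ℝ)) / m) := by
    intro k u
    rw [B1_add_nat]
    congr 2
    push_cast
    ring
  have hsum : (∑ k ∈ Finset.range m, ∫ u in (0:ℝ)..1,
        B1 u * B1 (((n:ℝ) * u + ((n*k : ℕ):ℝ)) / m))
      = ∫ u in (0:ℝ)..1, B1 u * B1 ((n:ℝ) * u) := by
    rw [← intervalIntegral.integral_finset_sum]
    · apply intervalIntegral.integral_congr
      intro u _
      show (∑ i ∈ Finset.range m, B1 u * B1 (((n:ℝ) * u + ((n * i : ℕ):ℝ)) / m))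
        = B1 u * B1 ((n:ℝ) * u)
      rw [← Finset.mul_sum, B1_sum_coprime m n hm h ((n:ℝ) * u)]
    · intro k _
      exact B1_II measurable_id (((measurable_id.const_mul ((n:ℝ))).add_const _).div_const _) _ _
  calc (∫ x in (0:ℝ)..1, B1 ((m:ℝ) * x) * B1 ((n:ℝ) * x))
      = (m:ℝ)⁻¹ • ∫ u in ((m:ℝ)*0)..((m:ℝ)*1), B1 u * B1 ((n:ℝ) * u / m) := hstep1
    _ = (m:ℝ)⁻¹ • ∫ u in ((0:ℕ):ℝ)..((m:ℕ):ℝ), B1 u * B1 ((n:ℝ) * u / m) := by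
        norm_num
    _ = (m:ℝ)⁻¹ • ∑ k ∈ Finset.range m, ∫ u in (0:ℝ)..1,
          B1 u * B1 (((n:ℝ) * u + ((n*k : ℕ):ℝ)) / m) := by
        rw [hsplit]
        congr 1
        refine Finset.sum_congr rfl fun k _ => ?_
        rw [hshift k]
        apply intervalIntegral.integral_congr
        intro u _
        exact hpt k u
    _ = (m:ℝ)⁻¹ • ∫ u in (0:ℝ)..1, B1 u * B1 ((n:ℝ) * u) := by rw [hsum]
    _ = (1 / m) * ∫ x in (0:ℝ)..1, B1 x * B1 ((n:ℝ) * x) := by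
        rw [smul_eq_mul, one_div]

lemma franel_scale (d m n : ℕ) (hd : 0 < d) :
    (∫ x in (0:ℝ)..1, B1 (((d*m : ℕ):ℝ) * x) * B1 (((d*n : ℕ):ℝ) * x))
      = ∫ x in (0:ℝ)..1, B1 ((m:ℝ) * x) * B1 ((n:ℝ) * x) := by
  have hd0 : (d : ℝ) ≠ 0 := Nat.cast_ne_zero.mpr hd.ne'
  have hper : Function.Periodic (fun u : ℝ => B1 ((m:ℝ) * u) * B1 ((n:ℝ) * u)) 1 := by
    intro u
    simp only [mul_add, mul_one]
    rw [show (m:ℝ) * u + (m:ℝ) = (m:ℝ)*u + ((m:ℕ):ℝ) by norm_num, B1_add_nat,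
      show (n:ℝ) * u + (n:ℝ) = (n:ℝ)*u + ((n:ℕ):ℝ) by norm_num, B1_add_nat]
  have hint : ∀ t₁ t₂ : ℝ, IntervalIntegrable
      (fun u : ℝ => B1 ((m:ℝ) * u) * B1 ((n:ℝ) * u)) volume t₁ t₂ :=
    fun t₁ t₂ => B1_II (measurable_id.const_mul _) (measurable_id.const_mul _) _ _
  have hzs := hper.intervalIntegral_add_zsmul_eq (d : ℤ) 0 hint
  have hstep1 : (∫ x in (0:ℝ)..1, B1 (((d*m : ℕ):ℝ) * x) * B1 (((d*n : ℕ):ℝ) * x))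
      = (d:ℝ)⁻¹ • ∫ u in ((d:ℝ)*0)..((d:ℝ)*1), B1 ((m:ℝ) * u) * B1 ((n:ℝ) * u) := by
    rw [← intervalIntegral.integral_comp_mul_left
      (f := fun u => B1 ((m:ℝ) * u) * B1 ((n:ℝ) * u)) hd0]
    apply intervalIntegral.integral_congr
    intro x _
    simp only []
    push_cast
    ring_nf
  rw [hstep1]
  rw [show (d:ℝ)*0 = (0:ℝ) by ring, show (d:ℝ)*1 = (0:ℝ) + (d:ℤ) • (1:ℝ) by simp]
  rw [hzs]
  simp [hd0]

lemma base_integral : (∫ x in (0:ℝ)..1, B1 x * B1 x) = 1/12 := by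
  have hae : ∀ᵐ x : ℝ, x ∈ Set.uIoc (0:ℝ) 1 → B1 x * B1 x = (x - 1/2) * (x - 1/2) := by
    have h1 : ∀ᵐ x : ℝ, x ≠ 1 := by
      rw [MeasureTheory.ae_iff]
      have : {x : ℝ | ¬ x ≠ 1} = {1} := by ext x; simp
      rw [this]
      exact Real.volume_singleton
    filter_upwards [h1] with x hx hmem
    rw [Set.uIoc_of_le (by norm_num : (0:ℝ) ≤ 1)] at hmem
    have h0 : 0 ≤ x := le_of_lt hmem.1
    have h2 : x < 1 := lt_of_le_of_ne hmem.2 hx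
    rw [B1, Int.fract_eq_self.mpr ⟨h0, h2⟩]
  rw [intervalIntegral.integral_congr_ae hae]
  have : ∀ x : ℝ, (x - 1/2) * (x - 1/2) = (x - 1/2)^2 := fun x => (sq _).symm
  simp_rw [this]
  rw [intervalIntegral.integral_comp_sub_right (fun x => x^2) (1/2)]
  rw [integral_pow]
  norm_num

theorem franel_identity (m n : ℕ) (hm : 0 < m) (hn : 0 < n) :
    ∫ x in (0:ℝ)..1, (Int.fract (m * x) - 1/2) * (Int.fract (n * x) - 1/2)
      = (Nat.gcd m n : ℝ)^2 / (12 * m * n) := by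
  set d := Nat.gcd m n with hd
  have hdpos : 0 < d := Nat.gcd_pos_of_pos_left n hm
  set m' := m / d with hm'def
  set n' := n / d with hn'def
  have hmm : d * m' = m := Nat.mul_div_cancel' (Nat.gcd_dvd_left m n)
  have hnn : d * n' = n := Nat.mul_div_cancel' (Nat.gcd_dvd_right m n)
  have hm'pos : 0 < m' := Nat.div_pos (Nat.le_of_dvd hm (Nat.gcd_dvd_left m n)) hdpos
  have hn'pos : 0 < n' := Nat.div_pos (Nat.le_of_dvd hn (Nat.gcd_dvd_right m n)) hdpos
  have hco : Nat.gcd m' n' = 1 := Nat.coprime_div_gcd_div_gcd hdpos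
  have hstep : (∫ x in (0:ℝ)..1, (Int.fract (m * x) - 1/2) * (Int.fract (n * x) - 1/2))
      = ∫ x in (0:ℝ)..1, B1 ((m:ℝ) * x) * B1 ((n:ℝ) * x) := rfl
  rw [hstep, ← hmm, ← hnn, franel_scale d m' n' hdpos, franel_key m' n' hm'pos hco]
  have hswap : (∫ x in (0:ℝ)..1, B1 x * B1 ((n':ℝ) * x))
      = ∫ x in (0:ℝ)..1, B1 ((n':ℝ) * x) * B1 (((1:ℕ):ℝ) * x) := by
    apply intervalIntegral.integral_congr
    intro x _
    push_cast
    rw [one_mul, mul_comm]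
  rw [hswap, franel_key n' 1 hn'pos (Nat.gcd_one_right n')]
  have hone : (∫ x in (0:ℝ)..1, B1 x * B1 (((1:ℕ):ℝ) * x))
      = ∫ x in (0:ℝ)..1, B1 x * B1 x := by
    apply intervalIntegral.integral_congr
    intro x _
    push_cast
    rw [one_mul]
  rw [hone, base_integral]
  have hd0 : (d:ℝ) ≠ 0 := Nat.cast_ne_zero.mpr hdpos.ne'
  have hm'0 : (m':ℝ) ≠ 0 := Nat.cast_ne_zero.mpr hm'pos.ne'
  have hn'0 : (n':ℝ) ≠ 0 := Nat.cast_ne_zero.mpr hn'pos.ne'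
  push_cast
  field_simp
end

section
/- For coprime positive integers m, n and a real parameter a, ∫₀¹ ({m x} − a)({n x} − a) dx = 1/(12 m n) + (1/2 − a)². -/
open Finset MeasureTheory intervalIntegral Set

private lemma gauss_real (N : ℕ) : ∑ j ∈ Finset.range N, (j : ℝ) = N * (N - 1) / 2 := by
  induction N with
  | zero => simp
  | succ n ih => rw [Finset.sum_range_succ, ih]; push_cast; ring

private lemma sum_affine (M : ℕ) (p q : ℝ) :
    ∑ i ∈ Finset.range M, (p + q * (i : ℝ)) = M * p + q * (M * (M - 1) / 2) := by
  rw [Finset.sum_add_distrib, Finset.sum_const, ← Finset.mul_sum, gauss_real]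
  simp [nsmul_eq_mul]

private lemma sum_crt (m n : ℕ) (hm : 0 < m) (hn : 0 < n) (h : Nat.Coprime m n)
    (f : ℕ → ℕ → ℝ) :
    ∑ k ∈ Finset.range (m * n), f (k % m) (k % n)
      = ∑ i ∈ Finset.range m, ∑ j ∈ Finset.range n, f i j := by
  rw [← Finset.sum_product']
  refine Finset.sum_nbij' (fun k => (k % m, k % n))
    (fun p => (Nat.chineseRemainder h p.1 p.2 : ℕ) % (m * n)) ?_ ?_ ?_ ?_ ?_
  · intro k hk
    simp only [Finset.mem_product, Finset.mem_range]
    exact ⟨Nat.mod_lt _ hm, Nat.mod_lt _ hn⟩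
  · intro p hp
    exact Finset.mem_range.2 (Nat.mod_lt _ (Nat.mul_pos hm hn))
  · intro k hk
    have hk' := Finset.mem_range.1 hk
    set c := (Nat.chineseRemainder h (k % m) (k % n) : ℕ) with hc
    have h1 : c ≡ k [MOD m] :=
      (Nat.chineseRemainder h (k % m) (k % n)).2.1.trans (Nat.mod_modEq k m)
    have h2 : c ≡ k [MOD n] :=
      (Nat.chineseRemainder h (k % m) (k % n)).2.2.trans (Nat.mod_modEq k n)
    have h3 : c ≡ k [MOD m * n] := (Nat.modEq_and_modEq_iff_modEq_mul h).1 ⟨h1, h2⟩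
    have h4 : c % (m * n) = k % (m * n) := h3
    show c % (m * n) = k
    rw [h4, Nat.mod_eq_of_lt hk']
  · rintro ⟨i, j⟩ hp
    simp only [Finset.mem_product, Finset.mem_range] at hp
    set c := (Nat.chineseRemainder h i j : ℕ) with hc
    have h1 : c % m = i := by
      have := (Nat.chineseRemainder h i j).2.1
      rw [Nat.ModEq] at this
      rw [this, Nat.mod_eq_of_lt hp.1]
    have h2 : c % n = j := by
      have := (Nat.chineseRemainder h i j).2.2
      rw [Nat.ModEq] at this
      rw [this, Nat.mod_eq_of_lt hp.2]
    have e1 : c % (m * n) % m = i := by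
      rw [Nat.mod_mod_of_dvd _ (dvd_mul_right m n), h1]
    have e2 : c % (m * n) % n = j := by
      rw [Nat.mod_mod_of_dvd _ (dvd_mul_left n m), h2]
    exact Prod.ext e1 e2
  · intro k hk; rfl

private lemma franel_integrable (m n : ℕ) (a u v : ℝ) :
    IntervalIntegrable
      (fun x => (Int.fract ((m : ℝ) * x) - a) * (Int.fract ((n : ℝ) * x) - a))
      volume u v := by
  rw [intervalIntegrable_iff]
  have hmeas : Measurable fun x : ℝ =>
      (Int.fract ((m : ℝ) * x) - a) * (Int.fract ((n : ℝ) * x) - a) :=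
    ((measurable_fract.comp (measurable_const_mul _)).sub measurable_const).mul
      ((measurable_fract.comp (measurable_const_mul _)).sub measurable_const)
  refine Integrable.mono' (g := fun _ => (1 + |a|) * (1 + |a|))
    (MeasureTheory.integrableOn_const measure_Ioc_lt_top.ne enorm_ne_top)
    hmeas.aestronglyMeasurable ?_
  refine Filter.Eventually.of_forall fun x => ?_
  have hb : ∀ y : ℝ, |Int.fract y - a| ≤ 1 + |a| := by
    intro y
    have h1 := Int.fract_nonneg y
    have h2 := Int.fract_lt_one y
    rw [abs_sub_comm]
    calc |a - Int.fract y| ≤ |a| + |Int.fract y| := abs_sub _ _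
      _ ≤ |a| + 1 := by rw [abs_of_nonneg h1]; linarith
      _ = 1 + |a| := by ring
  rw [Real.norm_eq_abs, abs_mul]
  have ha : (0:ℝ) ≤ 1 + |a| := by positivity
  exact mul_le_mul (hb _) (hb _) (abs_nonneg _) ha

private lemma poly_integral (A B c d u v : ℝ) :
    ∫ x in u..v, (A * x - c) * (B * x - d)
      = A * B * (v ^ 3 - u ^ 3) / 3 - (A * d + B * c) * (v ^ 2 - u ^ 2) / 2
        + c * d * (v - u) := by
  have hder : ∀ x ∈ Set.uIcc u v,
      HasDerivAt (fun y => A * B / 3 * y ^ 3 - (A * d + B * c) / 2 * y ^ 2 + c * d * y)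
        ((A * x - c) * (B * x - d)) x := by
    intro x _
    have p3 := (hasDerivAt_pow 3 x).const_mul (A * B / 3)
    have p2 := (hasDerivAt_pow 2 x).const_mul ((A * d + B * c) / 2)
    have p1 := (hasDerivAt_id x).const_mul (c * d)
    have h1 := (p3.sub p2).add p1
    exact h1.congr_deriv (by push_cast; ring)
  have hint : IntervalIntegrable (fun x => (A * x - c) * (B * x - d)) volume u v :=
    (Continuous.mul (by continuity) (by continuity)).intervalIntegrable u v
  rw [intervalIntegral.integral_eq_sub_of_hasDerivAt hder hint]
  ring

private lemma floor_piece (m n k : ℕ) (hm : 0 < m) (hn : 0 < n) (x : ℝ)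
    (hx1 : (k : ℝ) / (m * n) < x) (hx2 : x < ((k : ℝ) + 1) / (m * n)) :
    ⌊(m : ℝ) * x⌋ = (k / n : ℕ) := by
  have hm' : (0:ℝ) < m := by exact_mod_cast hm
  have hn' : (0:ℝ) < n := by exact_mod_cast hn
  rw [Int.floor_eq_iff]
  constructor
  · 
    have h1 : ((k / n : ℕ) : ℝ) ≤ (k : ℝ) / n := Nat.cast_div_le
    have h2 : (m : ℝ) * ((k : ℝ) / (m * n)) < m * x := by
      exact mul_lt_mul_of_pos_left hx1 hm'
    have h3 : (m : ℝ) * ((k : ℝ) / (m * n)) = (k : ℝ) / n := by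
      field_simp
    rw [Int.cast_natCast]
    linarith
  · have h2 : (m : ℝ) * x < m * (((k : ℝ) + 1) / (m * n)) :=
      mul_lt_mul_of_pos_left hx2 hm'
    have h3 : (m : ℝ) * (((k : ℝ) + 1) / (m * n)) = ((k : ℝ) + 1) / n := by
      field_simp
    have h4 : ((k : ℝ) + 1) / n ≤ ((k / n : ℕ) : ℝ) + 1 := by
      rw [div_le_iff₀ hn']
      have : k + 1 ≤ n * (k / n) + n := by
        have h5 := Nat.div_add_mod k n
        have h6 := Nat.mod_lt k hn
        omega
      have := (Nat.cast_le (α := ℝ)).2 this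
      push_cast at this
      linarith
    rw [Int.cast_natCast]
    linarith

theorem franel_shifted (m n : ℕ) (hm : 0 < m) (hn : 0 < n) (hmn : Nat.Coprime m n) (a : ℝ) :
    ∫ x in (0:ℝ)..1, (Int.fract (m * x) - a) * (Int.fract (n * x) - a)
      = 1 / (12 * m * n) + (1/2 - a)^2 := by
  have hm' : (0:ℝ) < m := by exact_mod_cast hm
  have hn' : (0:ℝ) < n := by exact_mod_cast hn
  have hN : 0 < m * n := Nat.mul_pos hm hn
  have hN' : (0:ℝ) < (m : ℝ) * n := by positivity
  set N : ℕ := m * n with hNdef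
  set f : ℝ → ℝ := fun x => (Int.fract ((m : ℝ) * x) - a) * (Int.fract ((n : ℝ) * x) - a)
    with hf
  set g : ℕ → ℕ → ℝ := fun s r =>
    (1 / ((m : ℝ) * n)) * (((r : ℝ) * s + ((r : ℝ) + s) / 2 + 1 / 3) / ((m : ℝ) * n)
      - a * ((r : ℝ) + 1 / 2) / n - a * ((s : ℝ) + 1 / 2) / m + a ^ 2) with hg
  -- Step 1: split the integral
  have hsplit : ∫ x in (0:ℝ)..1, f x
      = ∑ k ∈ Finset.range N, ∫ x in ((k : ℝ) / N)..(((k : ℝ) + 1) / N), f x := by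
    have := intervalIntegral.sum_integral_adjacent_intervals (μ := volume) (f := f)
      (a := fun k : ℕ => (k : ℝ) / N) (n := N)
      (fun k _ => franel_integrable m n a _ _)
    have hNne : (N : ℝ) ≠ 0 := by positivity
    simp only [Nat.cast_zero, zero_div, div_self hNne] at this
    rw [← this]
    apply Finset.sum_congr rfl
    intro k _
    norm_num
  -- Step 2: each piece equals g (k % m) (k % n)
  have hpiece : ∀ k ∈ Finset.range N,
      (∫ x in ((k : ℝ) / N)..(((k : ℝ) + 1) / N), f x) = g (k % m) (k % n) := by
    intro k hk
    have hle : (k : ℝ) / N ≤ ((k : ℝ) + 1) / N := by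
      apply div_le_div_of_nonneg_right ?_ ?_ <;> try positivity
      linarith
    have hNcast : (N : ℝ) = (m : ℝ) * n := by push_cast [hNdef]; ring
    -- replace f by the polynomial a.e.
    have hcongr : (∫ x in ((k : ℝ) / N)..(((k : ℝ) + 1) / N), f x)
        = ∫ x in ((k : ℝ) / N)..(((k : ℝ) + 1) / N),
            ((m : ℝ) * x - (((k / n : ℕ) : ℝ) + a)) * ((n : ℝ) * x - (((k / m : ℕ) : ℝ) + a)) := by
      apply intervalIntegral.integral_congr_ae
      have hv : ∀ᵐ x : ℝ, x ≠ ((k : ℝ) + 1) / N := by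
        rw [MeasureTheory.ae_iff]
        have : {x : ℝ | ¬x ≠ ((k : ℝ) + 1) / N} = {((k : ℝ) + 1) / N} := by
          ext y; simp
        rw [this]
        exact measure_singleton _
      filter_upwards [hv] with x hxne hx
      rw [Set.uIoc_of_le hle] at hx
      have hx1 : (k : ℝ) / N < x := hx.1
      have hx2 : x < ((k : ℝ) + 1) / N := lt_of_le_of_ne hx.2 hxne
      rw [hNcast] at hx1 hx2
      have hfl1 : ⌊(m : ℝ) * x⌋ = (k / n : ℕ) := floor_piece m n k hm hn x hx1 hx2
      have hfl2 : ⌊(n : ℝ) * x⌋ = (k / m : ℕ) := by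
        apply floor_piece n m k hn hm x
        · rw [mul_comm (n:ℝ) m]; exact hx1
        · rw [mul_comm (n:ℝ) m]; exact hx2
      show (Int.fract ((m : ℝ) * x) - a) * (Int.fract ((n : ℝ) * x) - a) = _
      rw [Int.fract, Int.fract, hfl1, hfl2]
      simp only [Int.cast_natCast]
      ring
    rw [hcongr, poly_integral]
    -- now pure algebra
    have h1 : (k : ℝ) = n * ((k / n : ℕ) : ℝ) + ((k % n : ℕ) : ℝ) := by
      conv_lhs => rw [← Nat.div_add_mod k n]
      push_cast [Nat.cast_div_le]
      norm_cast
    have h2 : (k : ℝ) = m * ((k / m : ℕ) : ℝ) + ((k % m : ℕ) : ℝ) := by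
      conv_lhs => rw [← Nat.div_add_mod k m]
      push_cast [Nat.cast_div_le]
      norm_cast
    have hr : ((k % n : ℕ) : ℝ) = (k : ℝ) - n * ((k / n : ℕ) : ℝ) := by linarith
    have hs : ((k % m : ℕ) : ℝ) = (k : ℝ) - m * ((k / m : ℕ) : ℝ) := by linarith
    rw [hg]
    simp only []
    rw [hr, hs, hNcast]
    field_simp
    ring
  rw [hsplit, Finset.sum_congr rfl hpiece, hNdef,
    sum_crt m n hm hn hmn g]
  -- Step 3: evaluate the double sum
  have hdouble : ∀ α β γ δ : ℝ, ∑ i ∈ Finset.range m, ∑ j ∈ Finset.range n,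
        (α + β * (j : ℝ) + γ * (i : ℝ) + δ * ((i : ℝ) * j))
      = m * n * α + m * ((n : ℝ) * (n - 1) / 2) * β + n * ((m : ℝ) * (m - 1) / 2) * γ
        + ((m : ℝ) * (m - 1) / 2) * ((n : ℝ) * (n - 1) / 2) * δ := by
    intro α β γ δ
    have hin : ∀ i : ℕ, ∑ j ∈ Finset.range n,
        (α + β * (j : ℝ) + γ * (i : ℝ) + δ * ((i : ℝ) * j))
        = (n * α + β * ((n : ℝ) * (n - 1) / 2))
          + ((n : ℝ) * γ + δ * ((n : ℝ) * (n - 1) / 2)) * i := by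
      intro i
      have := sum_affine n (α + γ * (i : ℝ)) (β + δ * (i : ℝ))
      rw [Finset.sum_congr rfl (fun j _ => by ring :
        ∀ j ∈ Finset.range n, (α + β * (j : ℝ) + γ * (i : ℝ) + δ * ((i : ℝ) * j))
          = (α + γ * (i : ℝ)) + (β + δ * (i : ℝ)) * (j : ℝ)), this]
      ring
    rw [Finset.sum_congr rfl (fun i _ => hin i), sum_affine]
    ring
  set α : ℝ := (1/3) / ((m:ℝ)*n)^2 - a / (2*((m:ℝ)*n)*n) - a / (2*((m:ℝ)*n)*m)
      + a^2 / ((m:ℝ)*n) with hα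
  set β : ℝ := (1/2) / ((m:ℝ)*n)^2 - a / (((m:ℝ)*n)*n) with hβ
  set γ : ℝ := (1/2) / ((m:ℝ)*n)^2 - a / (((m:ℝ)*n)*m) with hγ
  set δ : ℝ := 1 / ((m:ℝ)*n)^2 with hδ
  have hexp : ∀ i ∈ Finset.range m, ∑ j ∈ Finset.range n, g i j
      = ∑ j ∈ Finset.range n, (α + β * (j : ℝ) + γ * (i : ℝ) + δ * ((i : ℝ) * j)) := by
    intro i _
    apply Finset.sum_congr rfl
    intro j _
    rw [hg, hα, hβ, hγ, hδ]
    simp only []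
    field_simp
    ring
  rw [Finset.sum_congr rfl hexp, hdouble, hα, hβ, hγ, hδ]
  field_simp
  ring
end

section
/- (Parametric Dedekind–Rademacher reciprocity) Let ν₀, ν₁, ν₂ be pairwise coprime positive integers and fix a ∈ (0,1). Define f(x) = {x} − a and S_f(ν|ν_k) = Σ_{i=1}^{ν_k−1} f(iν_j/ν_k)·f(iν_l/ν_k) where {j,l} = {0,1,2}∖{k}. Then Σ_{k=0}^{2} S_f(ν|ν_k) = (ν₀²+ν₁²+ν₂²)/(12 ν₀ν₁ν₂) + (1/2 − a)²(ν₀+ν₁+ν₂) − (1 − 3a + 3a²). -/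
open Finset

-- Gauss sums
lemma gauss_nat (n : ℕ) : (∑ i ∈ Ico 1 n, 2*i) = n*(n-1) := by
  induction n with
  | zero => simp
  | succ n ih =>
    rcases Nat.eq_zero_or_pos n with rfl|hn
    · simp
    · rw [Finset.sum_Ico_succ_top (by omega), ih]
      rcases n with _|m
      · omega
      · simp [Nat.succ_sub_one]; ring

lemma sum_id_real (n : ℕ) : ∑ i ∈ Ico 1 n, (i:ℝ) = n*((n:ℝ)-1)/2 := by
  induction n with
  | zero => simp
  | succ n ih =>
    rcases Nat.eq_zero_or_pos n with rfl|hn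
    · simp
    · rw [Finset.sum_Ico_succ_top (by omega), ih]
      push_cast
      ring

lemma sum_sq_real (n : ℕ) : ∑ i ∈ Ico 1 n, (i:ℝ)^2 = n*((n:ℝ)-1)*(2*n-1)/6 := by
  induction n with
  | zero => simp
  | succ n ih =>
    rcases Nat.eq_zero_or_pos n with rfl|hn
    · simp
    · rw [Finset.sum_Ico_succ_top (by omega), ih]
      push_cast
      ring

lemma no_tie {a b i y : ℕ} (hi : 0 < i) (hia : i < a) (hco : Nat.Coprime a b) :
    i*b ≠ y*a := by
  intro h
  have hdvd : a ∣ i*b := ⟨y, by linarith⟩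
  have : a ∣ i := hco.dvd_of_dvd_mul_right hdvd
  have := Nat.le_of_dvd hi this
  omega

-- bijection lemma
lemma sum_mod_bij_s5 (a b : ℕ) (hco : Nat.Coprime a b) (g : ℕ → ℝ) :
    ∑ i ∈ range a, g ((i*b) % a) = ∑ i ∈ range a, g i := by
  rcases Nat.eq_zero_or_pos a with rfl|ha
  · simp
  have hinj : Set.InjOn (fun i => (i*b) % a) (range a) := by
    intro i hi j hj hij
    simp only [mem_coe, mem_range] at hi hj
    simp only at hij
    have hmod : i % a = j % a := by
      have h1 : (i*b) ≡ (j*b) [MOD a] := hij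
      have := (Nat.ModEq.cancel_right_of_coprime hco h1)
      exact this
    rwa [Nat.mod_eq_of_lt hi, Nat.mod_eq_of_lt hj] at hmod
  have hmaps : ∀ i ∈ range a, (i*b) % a ∈ range a := by
    intro i _
    exact mem_range.2 (Nat.mod_lt _ ha)
  have himg : (range a).image (fun i => (i*b) % a) = range a := by
    apply Finset.eq_of_subset_of_card_le
    · intro x hx
      rcases Finset.mem_image.1 hx with ⟨i, hi, rfl⟩
      exact hmaps i hi
    · rw [Finset.card_image_of_injOn hinj]
  calc ∑ i ∈ range a, g ((i*b) % a)
      = ∑ x ∈ (range a).image (fun i => (i*b) % a), g x := by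
        rw [Finset.sum_image (fun i hi j hj h => hinj hi hj h)]
    _ = ∑ i ∈ range a, g i := by rw [himg]

lemma count_lemma {a b i : ℕ} (hb : 0 < b) (hi : 1 ≤ i) (hia : i < a)
    (hco : Nat.Coprime a b) :
    (Ico 1 b).filter (fun y => y*a < i*b) = Ico 1 ((i*b)/a + 1) := by
  have ha : 0 < a := by omega
  ext y
  simp only [mem_filter, mem_Ico]
  constructor
  · rintro ⟨⟨h1, h2⟩, h3⟩
    refine ⟨h1, ?_⟩
    have : y ≤ (i*b)/a := (Nat.le_div_iff_mul_le ha).2 (le_of_lt h3)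
    omega
  · rintro ⟨h1, h2⟩
    have hy : y ≤ (i*b)/a := by omega
    have hle : y*a ≤ i*b := (Nat.le_div_iff_mul_le ha).1 hy
    have hne : i*b ≠ y*a := no_tie hi hia hco
    have hdb : (i*b)/a < b := Nat.div_lt_of_lt_mul (by nlinarith)
    exact ⟨⟨h1, by omega⟩, by omega⟩

lemma div_as_card {a b i : ℕ} (hb : 0 < b) (hi : 1 ≤ i) (hia : i < a)
    (hco : Nat.Coprime a b) :
    (i*b)/a = ((Ico 1 b).filter (fun y => y*a < i*b)).card := by
  rw [count_lemma hb hi hia hco, Nat.card_Ico, Nat.add_sub_cancel]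

-- pointwise trichotomy
lemma tri_point {a b c i y z : ℕ} (hi : 0 < i) (hia : i < a) (hy : 0 < y) (hyb : y < b)
    (hz : 0 < z) (hzc : z < c)
    (hab : Nat.Coprime a b) (hac : Nat.Coprime a c) (hbc : Nat.Coprime b c) :
    ((if y*a < i*b then 1 else 0) * (if z*a < i*c then 1 else 0)
    + (if z*b < y*c then 1 else 0) * (if i*b < y*a then 1 else 0)
    + (if i*c < z*a then 1 else 0) * (if y*c < z*b then 1 else 0) : ℕ) = 1 := by
  have h1 : i*b ≠ y*a := no_tie hi hia hab
  have h2 : i*c ≠ z*a := no_tie hi hia hac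
  have h3 : y*c ≠ z*b := no_tie hy hyb hbc
  have hb : 0 < b := by omega
  have hc : 0 < c := by omega
  have ha : 0 < a := by omega
  have f1 : y*a < i*b → i*c < z*a → y*c < z*b := by
    intro hu hv
    have e1 : (y*c)*a < (i*b)*c := by
      calc (y*c)*a = (y*a)*c := by ring
        _ < (i*b)*c := by exact Nat.mul_lt_mul_of_lt_of_le hu (le_refl c) hc
    have e2 : (i*b)*c < (z*b)*a := by
      calc (i*b)*c = (i*c)*b := by ring
        _ < (z*a)*b := Nat.mul_lt_mul_of_lt_of_le hv (le_refl b) hb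
        _ = (z*b)*a := by ring
    exact Nat.lt_of_mul_lt_mul_right (lt_trans e1 e2)
  have f2 : i*b < y*a → y*c < z*b → i*c < z*a := by
    intro hu hv
    have e1 : (i*c)*b < (y*a)*c := by
      calc (i*c)*b = (i*b)*c := by ring
        _ < (y*a)*c := Nat.mul_lt_mul_of_lt_of_le hu (le_refl c) hc
    have e2 : (y*a)*c < (z*a)*b := by
      calc (y*a)*c = (y*c)*a := by ring
        _ < (z*b)*a := Nat.mul_lt_mul_of_lt_of_le hv (le_refl a) ha
        _ = (z*a)*b := by ring
    exact Nat.lt_of_mul_lt_mul_right (lt_trans e1 e2)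
  generalize hP : i*b = P at *
  generalize hQ : y*a = Q at *
  generalize hR : i*c = R at *
  generalize hS : z*a = S at *
  generalize hT : y*c = T at *
  generalize hW : z*b = W at *
  split_ifs <;> omega

lemma Q_lemma {a b c : ℕ} (ha : 0 < a) (hb : 0 < b) (hc : 0 < c)
    (hab : Nat.Coprime a b) (hac : Nat.Coprime a c) (hbc : Nat.Coprime b c) :
    (∑ i ∈ Ico 1 a, ((i*b)/a) * ((i*c)/a))
    + (∑ y ∈ Ico 1 b, ((y*c)/b) * ((y*a)/b))
    + (∑ z ∈ Ico 1 c, ((z*a)/c) * ((z*b)/c)) = (a-1)*(b-1)*(c-1) := by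
  have key : ∀ (n m : ℕ) (p : ℕ → Prop) [DecidablePred p],
      ((Ico n m).filter p).card = ∑ x ∈ Ico n m, (if p x then 1 else 0) := by
    intro n m p _
    rw [Finset.card_filter]
  -- express each sum as a triple sum
  have e1 : (∑ i ∈ Ico 1 a, ((i*b)/a) * ((i*c)/a))
      = ∑ i ∈ Ico 1 a, ∑ y ∈ Ico 1 b, ∑ z ∈ Ico 1 c,
          (if y*a < i*b then 1 else 0) * (if z*a < i*c then 1 else 0) := by
    refine Finset.sum_congr rfl (fun i hi => ?_)
    rw [mem_Ico] at hi
    rw [div_as_card hb hi.1 hi.2 hab, div_as_card hc hi.1 hi.2 hac,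
      key, key, Finset.sum_mul_sum]
  have e2 : (∑ y ∈ Ico 1 b, ((y*c)/b) * ((y*a)/b))
      = ∑ i ∈ Ico 1 a, ∑ y ∈ Ico 1 b, ∑ z ∈ Ico 1 c,
          (if z*b < y*c then 1 else 0) * (if i*b < y*a then 1 else 0) := by
    have step : (∑ y ∈ Ico 1 b, ((y*c)/b) * ((y*a)/b))
        = ∑ y ∈ Ico 1 b, ∑ i ∈ Ico 1 a, ∑ z ∈ Ico 1 c,
          (if z*b < y*c then 1 else 0) * (if i*b < y*a then 1 else 0) := by
      refine Finset.sum_congr rfl (fun y hy => ?_)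
      rw [mem_Ico] at hy
      rw [div_as_card hc hy.1 hy.2 hbc, div_as_card ha hy.1 hy.2 (Nat.coprime_comm.1 hab),
        key, key, Finset.sum_mul_sum]
      exact Finset.sum_comm
    rw [step]
    exact Finset.sum_comm
  have e3 : (∑ z ∈ Ico 1 c, ((z*a)/c) * ((z*b)/c))
      = ∑ i ∈ Ico 1 a, ∑ y ∈ Ico 1 b, ∑ z ∈ Ico 1 c,
          (if i*c < z*a then 1 else 0) * (if y*c < z*b then 1 else 0) := by
    have step : (∑ z ∈ Ico 1 c, ((z*a)/c) * ((z*b)/c))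
        = ∑ z ∈ Ico 1 c, ∑ i ∈ Ico 1 a, ∑ y ∈ Ico 1 b,
          (if i*c < z*a then 1 else 0) * (if y*c < z*b then 1 else 0) := by
      refine Finset.sum_congr rfl (fun z hz => ?_)
      rw [mem_Ico] at hz
      rw [div_as_card ha hz.1 hz.2 (Nat.coprime_comm.1 hac),
        div_as_card hb hz.1 hz.2 (Nat.coprime_comm.1 hbc),
        key, key, Finset.sum_mul_sum]
    rw [step]
    rw [Finset.sum_comm]
    refine Finset.sum_congr rfl (fun i _ => ?_)
    exact Finset.sum_comm
  rw [e1, e2, e3, ← Finset.sum_add_distrib, ← Finset.sum_add_distrib]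
  have : ∀ i ∈ Ico 1 a, (∑ y ∈ Ico 1 b, ∑ z ∈ Ico 1 c,
          (if y*a < i*b then 1 else 0) * (if z*a < i*c then 1 else 0))
      + (∑ y ∈ Ico 1 b, ∑ z ∈ Ico 1 c,
          (if z*b < y*c then 1 else 0) * (if i*b < y*a then 1 else 0))
      + (∑ y ∈ Ico 1 b, ∑ z ∈ Ico 1 c,
          (if i*c < z*a then 1 else 0) * (if y*c < z*b then 1 else 0)) = (b-1)*(c-1) := by
    intro i hi
    rw [mem_Ico] at hi
    rw [← Finset.sum_add_distrib, ← Finset.sum_add_distrib]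
    have : ∀ y ∈ Ico 1 b, ((∑ z ∈ Ico 1 c,
          (if y*a < i*b then 1 else 0) * (if z*a < i*c then 1 else 0))
      + (∑ z ∈ Ico 1 c,
          (if z*b < y*c then 1 else 0) * (if i*b < y*a then 1 else 0))
      + (∑ z ∈ Ico 1 c,
          (if i*c < z*a then 1 else 0) * (if y*c < z*b then 1 else 0))) = c-1 := by
      intro y hy
      rw [mem_Ico] at hy
      rw [← Finset.sum_add_distrib, ← Finset.sum_add_distrib]
      have : ∀ z ∈ Ico 1 c, ((if y*a < i*b then 1 else 0) * (if z*a < i*c then 1 else 0)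
        + (if z*b < y*c then 1 else 0) * (if i*b < y*a then 1 else 0)
        + (if i*c < z*a then 1 else 0) * (if y*c < z*b then 1 else 0) : ℕ) = 1 := by
        intro z hz
        rw [mem_Ico] at hz
        exact tri_point hi.1 hi.2 hy.1 hy.2 hz.1 hz.2 hab hac hbc
      rw [Finset.sum_congr rfl this, Finset.sum_const, Nat.card_Ico, smul_eq_mul, mul_one]
    rw [Finset.sum_congr rfl this, Finset.sum_const, Nat.card_Ico, smul_eq_mul]
  rw [Finset.sum_congr rfl this, Finset.sum_const, Nat.card_Ico, smul_eq_mul,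
    ← Nat.mul_assoc]

lemma A_lemma {a b : ℕ} (ha : 0 < a) (hb : 0 < b) (hco : Nat.Coprime a b) :
    (∑ i ∈ Ico 1 a, 2*i*((i*b)/a))
    + (∑ y ∈ Ico 1 b, (((y*a)/b)*((y*a)/b) + (y*a)/b)) = a*(a-1)*(b-1) := by
  have key : ∀ i ∈ Ico 1 a, ∑ y ∈ Ico 1 b, 2*i
      = (∑ y ∈ Ico 1 b, if y*a < i*b then 2*i else 0)
      + (∑ y ∈ Ico 1 b, if i*b < y*a then 2*i else 0) := by
    intro i hi
    rw [mem_Ico] at hi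
    rw [← Finset.sum_add_distrib]
    refine Finset.sum_congr rfl (fun y hy => ?_)
    rw [mem_Ico] at hy
    have hne : i*b ≠ y*a := no_tie hi.1 hi.2 hco
    rcases lt_trichotomy (y*a) (i*b) with h|h|h
    · rw [if_pos h, if_neg (by omega)]
      omega
    · omega
    · rw [if_neg (by omega), if_pos h]
      omega
  have lhs1 : ∀ i ∈ Ico 1 a, (∑ y ∈ Ico 1 b, if y*a < i*b then 2*i else 0)
      = 2*i*((i*b)/a) := by
    intro i hi
    rw [mem_Ico] at hi
    rw [← Finset.sum_filter, Finset.sum_const, count_lemma hb hi.1 hi.2 hco,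
      Nat.card_Ico, Nat.add_sub_cancel, smul_eq_mul]
    ring
  have lhs2 : ∑ i ∈ Ico 1 a, (∑ y ∈ Ico 1 b, if i*b < y*a then 2*i else 0)
      = ∑ y ∈ Ico 1 b, (((y*a)/b)*((y*a)/b) + (y*a)/b) := by
    rw [Finset.sum_comm]
    refine Finset.sum_congr rfl (fun y hy => ?_)
    rw [mem_Ico] at hy
    have hcount : (Ico 1 a).filter (fun i => i*b < y*a) = Ico 1 ((y*a)/b + 1) :=
      count_lemma ha hy.1 hy.2 (Nat.coprime_comm.1 hco)
    rw [← Finset.sum_filter, hcount]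
    have := gauss_nat ((y*a)/b + 1)
    calc ∑ i ∈ Ico 1 ((y*a)/b + 1), 2*i = ((y*a)/b+1)*(((y*a)/b+1)-1) := gauss_nat _
      _ = ((y*a)/b)*((y*a)/b) + (y*a)/b := by
          rw [Nat.add_sub_cancel]; ring
  have total : ∑ i ∈ Ico 1 a, ∑ y ∈ Ico 1 b, 2*i = a*(a-1)*(b-1) := by
    have : ∀ i ∈ Ico 1 a, ∑ y ∈ Ico 1 b, 2*i = 2*i*(b-1) := by
      intro i _
      rw [Finset.sum_const, Nat.card_Ico, smul_eq_mul]
      ring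
    rw [Finset.sum_congr rfl this]
    have : ∑ i ∈ Ico 1 a, 2*i*(b-1) = (∑ i ∈ Ico 1 a, 2*i)*(b-1) := by
      rw [Finset.sum_mul]
    rw [this, gauss_nat]
  rw [Finset.sum_congr rfl key, Finset.sum_add_distrib,
    Finset.sum_congr rfl lhs1, lhs2] at total
  exact total

lemma fract_eq {a i b : ℕ} (ha : 0 < a) :
    Int.fract ((i:ℝ)*b/a) = ((i*b % a : ℕ) : ℝ) / (a:ℝ) := by
  have ha0 : (a:ℝ) ≠ 0 := Nat.cast_ne_zero.2 ha.ne'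
  have hsplit : (i:ℝ)*b/a = ((i*b % a : ℕ) : ℝ) / (a:ℝ) + ((i*b/a : ℕ) : ℕ) := by
    have h := Nat.mod_add_div (i*b) a
    have h2 := congrArg (fun n : ℕ => (n:ℝ)) h
    push_cast at h2
    field_simp
    linarith
  rw [hsplit, Int.fract_add_natCast, Int.fract_eq_self.2 ⟨by positivity, ?_⟩]
  rw [div_lt_one (by exact_mod_cast ha)]
  exact_mod_cast Nat.mod_lt _ ha

lemma sum_mod_lin {a b : ℕ} (ha : 0 < a) (hco : Nat.Coprime a b) :
    ∑ i ∈ Ico 1 a, ((i*b % a : ℕ) : ℝ) = a*((a:ℝ)-1)/2 := by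
  have hbij := sum_mod_bij_s5 a b hco (fun r => (r:ℝ))
  rw [Finset.range_eq_Ico, Finset.sum_eq_sum_Ico_succ_bot ha,
    Finset.sum_eq_sum_Ico_succ_bot ha (fun i => (i:ℝ))] at hbij
  simp only [Nat.zero_mul, Nat.zero_mod, Nat.cast_zero, zero_add] at hbij
  rw [hbij, sum_id_real]

lemma sum_mod_sq {a b : ℕ} (ha : 0 < a) (hco : Nat.Coprime a b) :
    ∑ i ∈ Ico 1 a, ((i*b % a : ℕ) : ℝ)^2 = a*((a:ℝ)-1)*(2*a-1)/6 := by
  have hbij := sum_mod_bij_s5 a b hco (fun r => (r:ℝ)^2)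
  rw [Finset.range_eq_Ico, Finset.sum_eq_sum_Ico_succ_bot ha,
    Finset.sum_eq_sum_Ico_succ_bot ha (fun i => (i:ℝ)^2)] at hbij
  simp only [Nat.zero_mul, Nat.zero_mod, Nat.cast_zero, zero_add,
    ne_eq, OfNat.ofNat_ne_zero, not_false_eq_true, zero_pow] at hbij
  rw [hbij, sum_sq_real]

lemma mod_cast_eq {a i b : ℕ} : ((i*b % a : ℕ) : ℝ) = (i:ℝ)*b - (a:ℝ)*((i*b/a : ℕ) : ℝ) := by
  have h := Nat.mod_add_div (i*b) a
  have h2 := congrArg (fun n : ℕ => (n:ℝ)) h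
  push_cast at h2
  linarith

lemma keyPair (a b : ℕ) (ha : 0 < a) (hb : 0 < b) (hco : Nat.Coprime a b) :
    12*(b:ℝ)*(∑ i ∈ Ico 1 a, (i:ℝ)*((i*b/a : ℕ) : ℝ))
      + 12*(a:ℝ)*(∑ y ∈ Ico 1 b, (y:ℝ)*((y*a/b : ℕ) : ℝ))
    = 3*(b:ℝ)*((a:ℝ)-1)*((b:ℝ)-1)*(2*(a:ℝ)-1)
      + ((a:ℝ)^2-1)*((b:ℝ)-1)*(2*(b:ℝ)-1) := by
  have hb0 : (b:ℝ) ≠ 0 := Nat.cast_ne_zero.2 hb.ne'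
  -- cast of A_lemma
  have h1 : 2*(∑ i ∈ Ico 1 a, (i:ℝ)*((i*b/a : ℕ) : ℝ))
      + ((∑ y ∈ Ico 1 b, ((y*a/b : ℕ) : ℝ)*((y*a/b : ℕ) : ℝ))
        + (∑ y ∈ Ico 1 b, ((y*a/b : ℕ) : ℝ)))
      = (a:ℝ)*((a:ℝ)-1)*((b:ℝ)-1) := by
    have hn := A_lemma ha hb hco
    have hc := congrArg (fun n : ℕ => (n:ℝ)) hn
    push_cast [Nat.cast_sub (show 1 ≤ a from ha), Nat.cast_sub (show 1 ≤ b from hb)] at hc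
    simp only [mul_assoc] at hc
    rw [← Finset.mul_sum, Finset.sum_add_distrib] at hc
    linarith [hc]
  -- M1 relation
  have h2 : (b:ℝ)*(∑ y ∈ Ico 1 b, ((y*a/b : ℕ) : ℝ))
      = (a:ℝ)*((b:ℝ)*((b:ℝ)-1)/2) - (b:ℝ)*((b:ℝ)-1)/2 := by
    have hpt : ∀ y ∈ Ico 1 b, (b:ℝ)*((y*a/b : ℕ) : ℝ) = (y:ℝ)*a - ((y*a % b : ℕ) : ℝ) := by
      intro y _
      have := mod_cast_eq (a := b) (i := y) (b := a)
      linarith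
    rw [Finset.mul_sum, Finset.sum_congr rfl hpt, Finset.sum_sub_distrib,
      sum_mod_lin hb (Nat.coprime_comm.1 hco), ← Finset.sum_mul, sum_id_real]
    ring
  -- M2 relation
  have h3 : (b:ℝ)^2*(∑ y ∈ Ico 1 b, ((y*a/b : ℕ) : ℝ)*((y*a/b : ℕ) : ℝ))
      = (a:ℝ)^2*((b:ℝ)*((b:ℝ)-1)*(2*(b:ℝ)-1)/6)
        - 2*(a:ℝ)*(∑ y ∈ Ico 1 b, (y:ℝ)*((y*a % b : ℕ) : ℝ))
        + (b:ℝ)*((b:ℝ)-1)*(2*(b:ℝ)-1)/6 := by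
    have hpt : ∀ y ∈ Ico 1 b, (b:ℝ)^2*(((y*a/b : ℕ) : ℝ)*((y*a/b : ℕ) : ℝ))
        = (a:ℝ)^2*(y:ℝ)^2 - 2*(a:ℝ)*((y:ℝ)*((y*a % b : ℕ) : ℝ)) + ((y*a % b : ℕ) : ℝ)^2 := by
      intro y _
      have e := mod_cast_eq (a := b) (i := y) (b := a)
      have hbq : (b:ℝ)*((y*a/b : ℕ) : ℝ) = (y:ℝ)*a - ((y*a % b : ℕ) : ℝ) := by linarith
      linear_combination ((b:ℝ)*((y*a/b : ℕ) : ℝ) + (y:ℝ)*a - ((y*a % b : ℕ) : ℝ)) * hbq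
    rw [Finset.mul_sum, Finset.sum_congr rfl hpt, Finset.sum_add_distrib,
      Finset.sum_sub_distrib, ← Finset.mul_sum, ← Finset.mul_sum,
      sum_sq_real, sum_mod_sq hb (Nat.coprime_comm.1 hco)]
  -- SR relation
  have h4 : (∑ y ∈ Ico 1 b, (y:ℝ)*((y*a % b : ℕ) : ℝ))
      = (a:ℝ)*((b:ℝ)*((b:ℝ)-1)*(2*(b:ℝ)-1)/6) - (b:ℝ)*(∑ y ∈ Ico 1 b, (y:ℝ)*((y*a/b : ℕ) : ℝ)) := by
    have hpt : ∀ y ∈ Ico 1 b, (y:ℝ)*((y*a % b : ℕ) : ℝ)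
        = (a:ℝ)*(y:ℝ)^2 - (b:ℝ)*((y:ℝ)*((y*a/b : ℕ) : ℝ)) := by
      intro y _
      have e := mod_cast_eq (a := b) (i := y) (b := a)
      linear_combination (y:ℝ) * e
    rw [Finset.sum_congr rfl hpt, Finset.sum_sub_distrib, ← Finset.mul_sum, ← Finset.mul_sum,
      sum_sq_real]
  apply mul_left_cancel₀ hb0
  linear_combination (6*(b:ℝ)^2)*h1 - (6*(b:ℝ))*h2 - 6*h3 + (12*(a:ℝ))*h4

lemma modulus (a b c : ℕ) (ha : 0 < a) (hab : Nat.Coprime a b) (hac : Nat.Coprime a c) (α : ℝ) :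
    6*(a:ℝ)*(∑ i ∈ Ico 1 a, (Int.fract ((i:ℝ)*b/a) - α) * (Int.fract ((i:ℝ)*c/a) - α))
    = (b:ℝ)*c*((a:ℝ)-1)*(2*(a:ℝ)-1)
      - 6*(b:ℝ)*(∑ i ∈ Ico 1 a, (i:ℝ)*((i*c/a : ℕ) : ℝ))
      - 6*(c:ℝ)*(∑ i ∈ Ico 1 a, (i:ℝ)*((i*b/a : ℕ) : ℝ))
      + 6*(a:ℝ)*(∑ i ∈ Ico 1 a, ((i*b/a : ℕ) : ℝ)*((i*c/a : ℕ) : ℝ))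
      - 6*α*((a:ℝ)-1)*(a:ℝ) + 6*α^2*((a:ℝ)-1)*(a:ℝ) := by
  have ha0 : (a:ℝ) ≠ 0 := Nat.cast_ne_zero.2 ha.ne'
  have hpt : ∀ i ∈ Ico 1 a, (Int.fract ((i:ℝ)*b/a) - α) * (Int.fract ((i:ℝ)*c/a) - α)
      = ((b:ℝ)*c/(a:ℝ)^2)*(i:ℝ)^2 - ((b:ℝ)/a)*((i:ℝ)*((i*c/a : ℕ) : ℝ))
        - ((c:ℝ)/a)*((i:ℝ)*((i*b/a : ℕ) : ℝ))
        + ((i*b/a : ℕ) : ℝ)*((i*c/a : ℕ) : ℝ)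
        - (α/a)*((i*b % a : ℕ) : ℝ) - (α/a)*((i*c % a : ℕ) : ℝ) + α^2 := by
    intro i _
    rw [fract_eq ha, fract_eq ha]
    have e1 := mod_cast_eq (a := a) (i := i) (b := b)
    have e2 := mod_cast_eq (a := a) (i := i) (b := c)
    rw [e1, e2]
    field_simp
    ring
  rw [Finset.sum_congr rfl hpt]
  simp only [Finset.sum_add_distrib, Finset.sum_sub_distrib, ← Finset.mul_sum,
    Finset.sum_const, Nat.card_Ico, nsmul_eq_mul]
  rw [sum_sq_real, sum_mod_lin ha hab, sum_mod_lin ha hac]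
  have hcard : ((a - 1 : ℕ) : ℝ) = (a:ℝ) - 1 := by
    rw [Nat.cast_sub ha]; simp
  rw [hcard]
  field_simp
  ring

theorem parametric_dedekind_rademacher (ν₀ ν₁ ν₂ : ℕ)
    (h₀ : 0 < ν₀) (h₁ : 0 < ν₁) (h₂ : 0 < ν₂)
    (hne01 : ν₀ ≠ ν₁) (hne02 : ν₀ ≠ ν₂) (hne12 : ν₁ ≠ ν₂)
    (h01 : Nat.Coprime ν₀ ν₁) (h02 : Nat.Coprime ν₀ ν₂) (h12 : Nat.Coprime ν₁ ν₂)
    (a : ℝ) (ha : a ∈ Set.Ioo (0:ℝ) 1) :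
    (∑ i ∈ Finset.Ico 1 ν₀, (Int.fract ((i:ℝ) * ν₁ / ν₀) - a) * (Int.fract ((i:ℝ) * ν₂ / ν₀) - a))
    + (∑ i ∈ Finset.Ico 1 ν₁, (Int.fract ((i:ℝ) * ν₀ / ν₁) - a) * (Int.fract ((i:ℝ) * ν₂ / ν₁) - a))
    + (∑ i ∈ Finset.Ico 1 ν₂, (Int.fract ((i:ℝ) * ν₀ / ν₂) - a) * (Int.fract ((i:ℝ) * ν₁ / ν₂) - a))
      = ((ν₀:ℝ)^2 + (ν₁:ℝ)^2 + (ν₂:ℝ)^2) / (12 * ν₀ * ν₁ * ν₂)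
        + (1/2 - a)^2 * ((ν₀:ℝ) + ν₁ + ν₂) - (1 - 3*a + 3*a^2) := by
  have hS0 := modulus ν₀ ν₁ ν₂ h₀ h01 h02 a
  have hS1 := modulus ν₁ ν₀ ν₂ h₁ (Nat.coprime_comm.1 h01) h12 a
  have hS2 := modulus ν₂ ν₀ ν₁ h₂ (Nat.coprime_comm.1 h02) (Nat.coprime_comm.1 h12) a
  have kp01 := keyPair ν₀ ν₁ h₀ h₁ h01
  have kp02 := keyPair ν₀ ν₂ h₀ h₂ h02
  have kp12 := keyPair ν₁ ν₂ h₁ h₂ h12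
  -- real cast of Q_lemma
  have hQn := Q_lemma h₀ h₁ h₂ h01 h02 h12
  have hQc := congrArg (fun n : ℕ => (n:ℝ)) hQn
  push_cast [Nat.cast_sub (show 1 ≤ ν₀ from h₀), Nat.cast_sub (show 1 ≤ ν₁ from h₁),
    Nat.cast_sub (show 1 ≤ ν₂ from h₂)] at hQc
  have hswap : ∑ y ∈ Ico 1 ν₁, ((y*ν₂/ν₁ : ℕ) : ℝ)*((y*ν₀/ν₁ : ℕ) : ℝ)
      = ∑ y ∈ Ico 1 ν₁, ((y*ν₀/ν₁ : ℕ) : ℝ)*((y*ν₂/ν₁ : ℕ) : ℝ) :=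
    Finset.sum_congr rfl (fun y _ => mul_comm _ _)
  rw [hswap] at hQc
  have h12ne : (12*(ν₀:ℝ)*ν₁*ν₂) ≠ 0 := by positivity
  apply mul_left_cancel₀ h12ne
  have expand : (12*(ν₀:ℝ)*ν₁*ν₂) * (((ν₀:ℝ)^2 + (ν₁:ℝ)^2 + (ν₂:ℝ)^2) / (12 * ν₀ * ν₁ * ν₂)
        + (1/2 - a)^2 * ((ν₀:ℝ) + ν₁ + ν₂) - (1 - 3*a + 3*a^2))
      = ((ν₀:ℝ)^2 + (ν₁:ℝ)^2 + (ν₂:ℝ)^2)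
        + (12*(ν₀:ℝ)*ν₁*ν₂) * ((1/2 - a)^2 * ((ν₀:ℝ) + ν₁ + ν₂))
        - (12*(ν₀:ℝ)*ν₁*ν₂) * (1 - 3*a + 3*a^2) := by
    field_simp
  rw [expand]
  linear_combination (2*(ν₁:ℝ)*ν₂)*hS0 + (2*(ν₀:ℝ)*ν₂)*hS1 + (2*(ν₀:ℝ)*ν₁)*hS2
    - (ν₂:ℝ)^2*kp01 - (ν₁:ℝ)^2*kp02 - (ν₀:ℝ)^2*kp12 + (12*(ν₀:ℝ)*ν₁*ν₂)*hQc
end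

section
/- (Convergence of the lattice multiple zeta value) For any vector ν of pairwise distinct positive integers and any q = (q₀,…,q_r) with all q_j ≥ 1 and r ≥ 1, the sum ζ_{ν,q} := Σ_{n ∈ ν^⊥_{ℤ×}} ∏_{j=0}^{r} |n_j|^{−q_j} converges (is finite), where ν^⊥_{ℤ×} = { n ∈ (ℤ∖{0})^{r+1} : Σ ν_j n_j = 0 }. -/
open Finset

private lemma summable_finset_sum' {ι α : Type*} (s : Finset ι) (f : ι → α → ℝ)
    (h : ∀ i ∈ s, Summable (f i)) : Summable fun x => ∑ i ∈ s, f i x := by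
  classical
  induction s using Finset.induction with
  | empty => simpa using summable_zero
  | insert _ _ hnot ih =>
      simp_rw [Finset.sum_insert hnot]
      exact (h _ (Finset.mem_insert_self _ _)).add
        (ih fun i hi => h i (Finset.mem_insert_of_mem hi))

private lemma summable_pi_prod : ∀ (n : ℕ) (g : Fin n → ℤ → ℝ), (∀ j, Summable (g j)) →
    (∀ j m, 0 ≤ g j m) → Summable (fun m : Fin n → ℤ => ∏ j, g j (m j)) := by
  intro n
  induction n with
  | zero => intro g _ _; simp; exact summable_of_finite_support (Set.toFinite _)
  | succ n ih =>
      intro g hs h0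
      have key : Summable (fun p : ℤ × (Fin n → ℤ) =>
          g 0 p.1 * ∏ j : Fin n, g j.succ (p.2 j)) := by
        apply Summable.mul_of_nonneg (f := g 0)
          (g := fun m : Fin n → ℤ => ∏ j : Fin n, g j.succ (m j))
        · exact hs 0
        · exact ih (fun j => g j.succ) (fun j => hs j.succ) (fun j m => h0 j.succ m)
        · exact fun m => h0 0 m
        · exact fun p => Finset.prod_nonneg fun j _ => h0 _ _
      rw [← (Fin.consEquiv (fun _ => ℤ)).summable_iff]
      refine key.congr fun p => ?_
      simp [Fin.consEquiv, Function.comp, Fin.prod_univ_succ]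

/-- The auxiliary exponent. -/
noncomputable def latticeE (r : ℕ) (l j : Fin (r+1)) : ℝ :=
  if j = l then 3/2 else 1 + 1/(2*r)

/-- The auxiliary comparison function. -/
noncomputable def latticeG (r : ℕ) (l j : Fin (r+1)) (m : ℤ) : ℝ :=
  |(m : ℝ)| ^ (-(latticeE r l j))

private lemma latticeE_sub_one_nonneg (r : ℕ) (hr : 1 ≤ r) (l j : Fin (r+1)) :
    0 ≤ latticeE r l j - 1 := by
  have hr0 : (0:ℝ) < r := by exact_mod_cast hr
  unfold latticeE; split_ifs with h
  · norm_num
  · have h2 : 0 ≤ 1 / (2 * (r:ℝ)) := by positivity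
    linarith

private lemma key_ineq (r : ℕ) (hr : 1 ≤ r) (q : Fin (r+1) → ℕ) (hq : ∀ j, 1 ≤ q j)
    (a : Fin (r+1) → ℝ) (ha1 : ∀ j, 1 ≤ a j) (k l : Fin (r+1))
    (hk : ∀ j, a j ≤ a k) (hl : l ≠ k) :
    ∏ j, a j ^ (-(q j : ℤ)) ≤
      ∏ i : Fin r, a (k.succAbove i) ^ (-(latticeE r l (k.succAbove i))) := by
  have hr0 : (0:ℝ) < r := by exact_mod_cast hr
  have ha0 : ∀ j, 0 < a j := fun j => lt_of_lt_of_le one_pos (ha1 j)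
  -- Step A: compare with exponent -1
  have stepA : ∏ j, a j ^ (-(q j : ℤ)) ≤ ∏ j, a j ^ (-1 : ℝ) := by
    apply Finset.prod_le_prod (fun j _ => zpow_nonneg (ha0 j).le _)
    intro j _
    rw [← Real.rpow_intCast (a j) (-(q j : ℤ))]
    apply Real.rpow_le_rpow_of_exponent_le (ha1 j)
    push_cast
    have : (1:ℝ) ≤ q j := by exact_mod_cast hq j
    linarith
  -- rewrite both sides as inverses
  have stepB : ∏ j, a j ^ (-1 : ℝ) = (∏ j, a j)⁻¹ := by
    simp [Real.rpow_neg_one, Finset.prod_inv_distrib]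
  have stepC : (∏ i : Fin r, a (k.succAbove i) ^ (-(latticeE r l (k.succAbove i))))
      = (∏ i : Fin r, a (k.succAbove i) ^ (latticeE r l (k.succAbove i)))⁻¹ := by
    rw [← Finset.prod_inv_distrib]
    exact Finset.prod_congr rfl fun i _ => Real.rpow_neg (ha0 _).le _
  -- Step D : the main product inequality
  have stepD : ∏ i : Fin r, a (k.succAbove i) ^ (latticeE r l (k.succAbove i))
      ≤ ∏ j, a j := by
    have split : ∀ i : Fin r, a (k.succAbove i) ^ (latticeE r l (k.succAbove i))
        = a (k.succAbove i) ^ (latticeE r l (k.succAbove i) - 1) * a (k.succAbove i) := by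
      intro i
      rw [Real.rpow_sub (ha0 _), Real.rpow_one, div_mul_cancel₀ _ (ha0 _).ne']
    rw [Finset.prod_congr rfl fun i _ => split i, Finset.prod_mul_distrib,
      Fin.prod_univ_succAbove a k]
    apply mul_le_mul_of_nonneg_right _
      (Finset.prod_nonneg fun i _ => (ha0 _).le)
    -- ∏ a(sA i)^(E-1) ≤ a k
    calc ∏ i : Fin r, a (k.succAbove i) ^ (latticeE r l (k.succAbove i) - 1)
        ≤ ∏ i : Fin r, a k ^ (latticeE r l (k.succAbove i) - 1) := by
          apply Finset.prod_le_prod (fun i _ => Real.rpow_nonneg (ha0 _).le _)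
          intro i _
          exact Real.rpow_le_rpow (ha0 _).le (hk _) (latticeE_sub_one_nonneg r hr l _)
      _ = a k ^ (∑ i : Fin r, (latticeE r l (k.succAbove i) - 1)) :=
          (Real.rpow_sum_of_pos (ha0 k) _ _).symm
      _ ≤ a k ^ (1:ℝ) := by
          apply Real.rpow_le_rpow_of_exponent_le (ha1 k)
          -- sum of exponents ≤ 1
          obtain ⟨i₀, hi₀⟩ := Fin.exists_succAbove_eq hl
          rw [← Finset.add_sum_erase _ _ (Finset.mem_univ i₀)]
          have h1 : latticeE r l (k.succAbove i₀) - 1 = 1/2 := by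
            rw [hi₀]; unfold latticeE; rw [if_pos rfl]; norm_num
          have h2 : ∀ i ∈ Finset.univ.erase i₀,
              latticeE r l (k.succAbove i) - 1 = 1/(2*r) := by
            intro i hi
            have hne : k.succAbove i ≠ l := by
              intro h
              exact (Finset.mem_erase.1 hi).1
                (Fin.succAbove_right_injective (p := k) (h.trans hi₀.symm))
            unfold latticeE; rw [if_neg hne]; ring
          rw [h1, Finset.sum_congr rfl h2, Finset.sum_const,
            Finset.card_erase_of_mem (Finset.mem_univ i₀), Finset.card_univ,
            Fintype.card_fin, nsmul_eq_mul]
          have hcast : ((r - 1 : ℕ) : ℝ) = (r : ℝ) - 1 := by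
            have : (1:ℕ) ≤ r := hr
            push_cast [this]; ring
          rw [hcast]
          have hmul : ((r:ℝ) - 1) * (1/(2*r)) ≤ (r:ℝ) * (1/(2*r)) := by
            apply mul_le_mul_of_nonneg_right (by linarith) (by positivity)
          have heq : (r:ℝ) * (1/(2*r)) = 1/2 := by field_simp
          linarith
      _ = a k := Real.rpow_one _
  calc ∏ j, a j ^ (-(q j : ℤ)) ≤ ∏ j, a j ^ (-1 : ℝ) := stepA
    _ = (∏ j, a j)⁻¹ := stepB
    _ ≤ (∏ i : Fin r, a (k.succAbove i) ^ (latticeE r l (k.succAbove i)))⁻¹ := by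
        apply inv_anti₀ (Finset.prod_pos fun i _ => Real.rpow_pos_of_pos (ha0 _) _) stepD
    _ = ∏ i : Fin r, a (k.succAbove i) ^ (-(latticeE r l (k.succAbove i))) := stepC.symm

theorem lattice_zeta_summable (r : ℕ) (hr : 1 ≤ r) (ν : Fin (r+1) → ℕ)
    (hpos : ∀ j, 0 < ν j) (hdist : ∀ j l, j ≠ l → ν j ≠ ν l)
    (q : Fin (r+1) → ℕ) (hq : ∀ j, 1 ≤ q j) :
    Summable (fun n : {n : Fin (r+1) → ℤ // (∀ j, n j ≠ 0) ∧ ∑ j, (ν j : ℤ) * n j = 0} =>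
      ∏ j, (|(n.1 j : ℝ)|) ^ (-(q j : ℤ))) := by
  classical
  have hr0 : (0:ℝ) < r := by exact_mod_cast hr
  set S := {n : Fin (r+1) → ℤ // (∀ j, n j ≠ 0) ∧ ∑ j, (ν j : ℤ) * n j = 0} with hS
  have hgs : ∀ l j : Fin (r+1), Summable (latticeG r l j) := by
    intro l j
    apply Real.summable_abs_int_rpow
    unfold latticeE
    split_ifs
    · norm_num
    · have : (0:ℝ) < 1/(2*r) := by positivity
      linarith
  have hg0 : ∀ (l j : Fin (r+1)) (m : ℤ), 0 ≤ latticeG r l j m :=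
    fun l j m => Real.rpow_nonneg (abs_nonneg _) _
  set F : Fin (r+1) → Fin (r+1) → S → ℝ :=
    fun k l n => ∏ i : Fin r, latticeG r l (k.succAbove i) (n.1 (k.succAbove i)) with hF
  have hF0 : ∀ k l n, 0 ≤ F k l n :=
    fun k l n => Finset.prod_nonneg fun i _ => hg0 _ _ _
  have hFs : ∀ k l, Summable (F k l) := by
    intro k l
    have hinj : Function.Injective (fun (n : S) (i : Fin r) => n.1 (k.succAbove i)) := by
      intro n n' h
      have hcoord : ∀ j, j ≠ k → n.1 j = n'.1 j := by
        intro j hj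
        obtain ⟨i, rfl⟩ := Fin.exists_succAbove_eq hj
        exact congrFun h i
      have hsum : (ν k : ℤ) * n.1 k = (ν k : ℤ) * n'.1 k := by
        have h1 := n.2.2
        have h2 := n'.2.2
        rw [Fin.sum_univ_succAbove _ k] at h1 h2
        have heq : ∑ i : Fin r, (ν (k.succAbove i) : ℤ) * n.1 (k.succAbove i)
            = ∑ i : Fin r, (ν (k.succAbove i) : ℤ) * n'.1 (k.succAbove i) :=
          Finset.sum_congr rfl fun i _ => by rw [hcoord _ (k.succAbove_ne i)]
        linarith
      have hkk : n.1 k = n'.1 k := by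
        have hν : (ν k : ℤ) ≠ 0 := by exact_mod_cast (hpos k).ne'
        exact mul_left_cancel₀ hν hsum
      apply Subtype.ext; funext j
      by_cases hj : j = k
      · rw [hj]; exact hkk
      · exact hcoord j hj
    exact (summable_pi_prod r (fun i => latticeG r l (k.succAbove i))
      (fun i => hgs l _) (fun i m => hg0 l _ m)).comp_injective hinj
  have hG : Summable (fun n : S => ∑ k, ∑ l, F k l n) :=
    summable_finset_sum' _ _ fun k _ =>
      summable_finset_sum' _ _ fun l _ => hFs k l
  apply Summable.of_nonneg_of_le
    (fun n => Finset.prod_nonneg fun j _ => zpow_nonneg (abs_nonneg _) _) _ hG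
  · intro n
    set a : Fin (r+1) → ℝ := fun j => |(n.1 j : ℝ)| with ha
    have ha1 : ∀ j, 1 ≤ a j := by
      intro j
      have h1 : (1:ℤ) ≤ |n.1 j| := Int.one_le_abs (n.2.1 j)
      have : ((1:ℤ):ℝ) ≤ (|n.1 j| : ℝ) := by exact_mod_cast h1
      simpa [ha] using this
    obtain ⟨k, -, hk⟩ := Finset.exists_max_image Finset.univ a ⟨0, Finset.mem_univ 0⟩
    have hk' : ∀ j, a j ≤ a k := fun j => hk j (Finset.mem_univ j)
    haveI : Nontrivial (Fin (r+1)) := by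
      apply Fin.nontrivial_iff_two_le.mpr; omega
    obtain ⟨l, hl⟩ := exists_ne k
    have hmain : ∏ j, a j ^ (-(q j : ℤ)) ≤ F k l n := by
      have := key_ineq r hr q hq a ha1 k l hk' hl
      simpa [hF, latticeG, ha] using this
    have h2 : F k l n ≤ ∑ l', F k l' n :=
      Finset.single_le_sum (fun l' _ => hF0 k l' n) (Finset.mem_univ l)
    have h3 : ∑ l', F k l' n ≤ ∑ k', ∑ l', F k' l' n :=
      Finset.single_le_sum (f := fun k' => ∑ l', F k' l' n)
        (fun k' _ => Finset.sum_nonneg fun l' _ => hF0 k' l' n) (Finset.mem_univ k)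
    calc ∏ j, |((n.1 j : ℤ) : ℝ)| ^ (-(q j : ℤ)) = ∏ j, a j ^ (-(q j : ℤ)) := rfl
      _ ≤ F k l n := hmain
      _ ≤ ∑ l', F k l' n := h2
      _ ≤ ∑ k', ∑ l', F k' l' n := h3
end
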